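/- Under the assumptions of the previous statement, the map $\underline{h} : [0,\infty) \to \mathbb{R}^K$ defined by $\underline{h}(0) = 0$ and, for $r > 0$, $\underline{h}(r)$ the unique balanced allocation (i.e., $\sum_l \underline{h}(r)_l = r$, $\underline{h}(r)_l \geq 0$, and $\widetilde{\mu}_l \widetilde{C}_l'(\underline{h}(r)_l/\widetilde{\rho}_l)$ equal across $l$), is continuous on $[0,\infty)$. -/

import Mathlib

open Set Filter

/-- Continuity of the optimal workload allocation map `h` on `[0, ∞)`:
`h 0 = 0` and for `r > 0`, `h r` is the unique balanced allocation (nonnegative,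
summing to `r`, with all indices `μ_l C_l'(h(r)_l / ρ_l)` equal). -/
theorem stmt1 (K : ℕ) (hK : 1 ≤ K)
    (C D : Fin K → ℝ → ℝ)
    (μ ρ : Fin K → ℝ) (hμ : ∀ l, 0 < μ l) (hρ : ∀ l, 0 < ρ l)
    (hderiv : ∀ l, ∀ x ∈ Set.Ici (0:ℝ), HasDerivWithinAt (C l) (D l x) (Set.Ici 0) x)
    (hC0 : ∀ l, C l 0 = 0) (hD0 : ∀ l, D l 0 = 0)
    (hCconv : ∀ l, StrictConvexOn ℝ (Set.Ici 0) (C l))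
    (hCnn : ∀ l, ∀ x ∈ Set.Ici (0:ℝ), 0 ≤ C l x)
    (hDmono : ∀ l, StrictMonoOn (D l) (Set.Ici 0))
    (hDcont : ∀ l, ContinuousOn (D l) (Set.Ici 0))
    (hDtop : ∀ l, Filter.Tendsto (D l) Filter.atTop Filter.atTop)
    (h : ℝ → Fin K → ℝ)
    (h0 : h 0 = 0)
    (hball : ∀ r : ℝ, 0 < r →
      (∀ l, 0 ≤ h r l) ∧ (∑ l, h r l = r) ∧
      ∀ l m, μ l * D l (h r l / ρ l) = μ m * D m (h r m / ρ m)) :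
    ContinuousOn h (Set.Ici 0) := by
  -- nonnegativity on all of Ici 0
  have hnn : ∀ r ∈ Set.Ici (0:ℝ), ∀ l, 0 ≤ h r l := by
    intro r hr l
    rcases eq_or_lt_of_le (Set.mem_Ici.mp hr) with h0r | h0r
    · rw [← h0r, h0]; rfl
    · exact (hball r h0r).1 l
  -- sum on all of Ici 0
  have hsum : ∀ r ∈ Set.Ici (0:ℝ), ∑ l, h r l = r := by
    intro r hr
    rcases eq_or_lt_of_le (Set.mem_Ici.mp hr) with h0r | h0r
    · rw [← h0r, h0]; simp
    · exact (hball r h0r).2.1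
  have hmem : ∀ s ∈ Set.Ici (0:ℝ), ∀ k, h s k / ρ k ∈ Set.Ici (0:ℝ) := by
    intro s hs k
    exact div_nonneg (hnn s hs k) (le_of_lt (hρ k))
  -- monotonicity of each coordinate
  have hmono : ∀ l, ∀ r ∈ Set.Ici (0:ℝ), ∀ r' ∈ Set.Ici (0:ℝ), r ≤ r' → h r l ≤ h r' l := by
    intro l r hr r' hr' hle
    rcases eq_or_lt_of_le hle with rfl | hlt
    · exact le_refl _
    rcases eq_or_lt_of_le (Set.mem_Ici.mp hr) with h0r | h0r
    · rw [← h0r, h0]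
      exact hnn r' (le_of_lt (h0r ▸ hlt)) l
    · -- 0 < r < r'
      have hr'pos : (0:ℝ) < r' := lt_trans h0r hlt
      -- there is some m with h r m < h r' m
      have hex : ∃ m, h r m < h r' m := by
        by_contra hcon
        push_neg at hcon
        have : r' ≤ r := by
          rw [← hsum r hr, ← hsum r' hr']
          exact Finset.sum_le_sum fun m _ => hcon m
        exact absurd hlt (not_lt.2 this)
      obtain ⟨m, hm⟩ := hex
      have hc : μ m * D m (h r m / ρ m) < μ m * D m (h r' m / ρ m) := by
        apply mul_lt_mul_of_pos_left _ (hμ m)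
        apply hDmono m (hmem r hr m) (hmem r' hr' m)
        exact (div_lt_div_iff_of_pos_right (hρ m)).2 hm
      have hcl : μ l * D l (h r l / ρ l) < μ l * D l (h r' l / ρ l) := by
        rw [(hball r h0r).2.2 l m, (hball r' hr'pos).2.2 l m]
        exact hc
      have : D l (h r l / ρ l) < D l (h r' l / ρ l) :=
        lt_of_mul_lt_mul_left (by simpa using hcl) (le_of_lt (hμ l))
      have hdiv : h r l / ρ l < h r' l / ρ l :=
        ((hDmono l).lt_iff_lt (hmem r hr l) (hmem r' hr' l)).1 this
      exact le_of_lt ((div_lt_div_iff_of_pos_right (hρ l)).1 hdiv)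
  -- each coordinate is 1-Lipschitz on Ici 0
  have hlip : ∀ l, ∀ r ∈ Set.Ici (0:ℝ), ∀ r' ∈ Set.Ici (0:ℝ), r ≤ r' →
      h r' l - h r l ≤ r' - r := by
    intro l r hr r' hr' hle
    have hsingle : h r' l - h r l ≤ ∑ m, (h r' m - h r m) :=
      Finset.single_le_sum (f := fun m => h r' m - h r m)
        (fun m _ => sub_nonneg.2 (hmono m r hr r' hr' hle)) (Finset.mem_univ l)
    calc h r' l - h r l ≤ ∑ m, (h r' m - h r m) := hsingle
      _ = (∑ m, h r' m) - ∑ m, h r m := by rw [Finset.sum_sub_distrib]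
      _ = r' - r := by rw [hsum r hr, hsum r' hr']
  -- conclude continuity, coordinatewise
  rw [continuousOn_pi]
  intro l
  apply LipschitzOnWith.continuousOn (K := 1)
  apply LipschitzOnWith.of_dist_le_mul
  intro x hx y hy
  simp only [NNReal.coe_one, one_mul, Real.dist_eq]
  rcases le_total x y with hxy | hxy
  · rw [abs_sub_comm, abs_of_nonneg (sub_nonneg.2 (hmono l x hx y hy hxy))]
    calc h y l - h x l ≤ y - x := hlip l x hx y hy hxy
      _ ≤ |y - x| := le_abs_self _
      _ = |x - y| := abs_sub_comm _ _
  · rw [abs_of_nonneg (sub_nonneg.2 (hmono l y hy x hx hxy))]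
    calc h x l - h y l ≤ x - y := hlip l y hy x hx hxy
      _ ≤ |x - y| := le_abs_self _
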